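/- Proposition 5(f): Suppose n_α ≥ 2, (1−δ)·f_α < c, and (1+δ(n_α−1))·f_α + (1+δ(n_α+n_β−2))·f_β < 2c < f_α·(2+δ(n_α−2)), and let g^e be the star on the type-α agents centered at a fixed type-α agent i₀ ∈ A, i.e. with edge set {{i₀, j} : j ∈ A, j ≠ i₀} (the strongly efficient network of Theorem 2(f)). Then g^e is core-stable if and only if f_α ≥ c. -/

import Mathlib

open Finset

noncomputable section

open scoped Classical

variable {I : Type*}

/-- Benefit function of the two-type connections model: a connection to a
type-α agent (a member of `A`) yields `fα`, a connection to a type-β agent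
yields `fβ` (before spatial discounting). -/
def fTheta [DecidableEq I] (A : Finset I) (fα fβ : ℝ) (j : I) : ℝ :=
  if j ∈ A then fα else fβ

/-- One-period payoff of agent `i` in network `g`:
`u_i(g) = Σ_{j ≠ i reachable from i} δ^(d_g(i,j)-1) f(θ_j) − deg_g(i)·c`. -/
def payoff [Fintype I] (f : I → ℝ) (c δ : ℝ) (g : SimpleGraph I) (i : I) : ℝ :=
  (∑ j ∈ univ.filter fun j => j ≠ i ∧ g.Reachable i j, δ ^ (g.dist i j - 1) * f j)
    - ((univ.filter fun j => g.Adj i j).card : ℝ) * c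

/-- Total one-period payoff `ν(g) = Σ_i u_i(g)`. -/
def totalPayoff [Fintype I] (f : I → ℝ) (c δ : ℝ) (g : SimpleGraph I) : ℝ :=
  ∑ i, payoff f c δ g i

/-- A network is strongly efficient if it maximizes the total payoff. -/
def StronglyEfficient [Fintype I] (f : I → ℝ) (c δ : ℝ) (g : SimpleGraph I) : Prop :=
  ∀ g' : SimpleGraph I, totalPayoff f c δ g' ≤ totalPayoff f c δ g

/-- A network `g` is core-stable if no subgroup `I'` of agents, together with a
network `g'` all of whose links are inside `I'`, gives every member of `I'` a
weakly higher payoff and some member a strictly higher payoff. -/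
def CoreStable [Fintype I] (f : I → ℝ) (c δ : ℝ) (g : SimpleGraph I) : Prop :=
  ¬ ∃ (I' : Finset I) (g' : SimpleGraph I),
      (∀ i j : I, g'.Adj i j → i ∈ I' ∧ j ∈ I') ∧
      (∀ i ∈ I', payoff f c δ g i ≤ payoff f c δ g' i) ∧
      (∃ i ∈ I', payoff f c δ g i < payoff f c δ g' i)

/-- The network whose links are exactly the pairs with at least one endpoint in `A`. -/
def withCore (A : Finset I) : SimpleGraph I where
  Adj i j := i ≠ j ∧ (i ∈ A ∨ j ∈ A)
  symm := ⟨fun i j h => ⟨h.1.symm, h.2.symm⟩⟩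
  loopless := ⟨fun i h => h.1 rfl⟩

/-- The clique on `A`: exactly all pairs of distinct members of `A` are linked. -/
def cliqueOn (A : Finset I) : SimpleGraph I where
  Adj i j := i ≠ j ∧ i ∈ A ∧ j ∈ A
  symm := ⟨fun i j h => ⟨h.1.symm, h.2.2, h.2.1⟩⟩
  loopless := ⟨fun i h => h.1 rfl⟩

/-- Clique on `A` together with the links `{i₀, j}` for every agent `j ∉ A`. -/
def coreStar (A : Finset I) (i₀ : I) : SimpleGraph I where
  Adj i j := i ≠ j ∧ ((i ∈ A ∧ j ∈ A) ∨ (i = i₀ ∧ j ∉ A) ∨ (j = i₀ ∧ i ∉ A))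
  symm := by
    refine ⟨?_⟩
    rintro i j ⟨hne, h⟩
    refine ⟨hne.symm, ?_⟩
    rcases h with h | h | h
    · exact Or.inl ⟨h.2, h.1⟩
    · exact Or.inr (Or.inr h)
    · exact Or.inr (Or.inl h)
  loopless := ⟨fun i h => h.1 rfl⟩

/-- The star on all agents centered at `i₀`. -/
def starAll (i₀ : I) : SimpleGraph I where
  Adj i j := i ≠ j ∧ (i = i₀ ∨ j = i₀)
  symm := ⟨fun i j h => ⟨h.1.symm, h.2.symm⟩⟩
  loopless := ⟨fun i h => h.1 rfl⟩

/-- The star on the agents in `A`, centered at `i₀`. -/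
def starOn (A : Finset I) (i₀ : I) : SimpleGraph I where
  Adj i j := i ≠ j ∧ (i = i₀ ∨ j = i₀) ∧ i ∈ A ∧ j ∈ A
  symm := ⟨fun i j h => ⟨h.1.symm, h.2.1.symm, h.2.2.2, h.2.2.1⟩⟩
  loopless := ⟨fun i h => h.1 rfl⟩

def reachSet [Fintype I] (g : SimpleGraph I) (i : I) : Finset I :=
  univ.filter fun j => j ≠ i ∧ g.Reachable i j

def nbrSet [Fintype I] (g : SimpleGraph I) (i : I) : Finset I :=
  univ.filter fun j => g.Adj i j

lemma payoff_eq [Fintype I] (f : I → ℝ) (c δ : ℝ) (g : SimpleGraph I) (i : I) :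
    payoff f c δ g i = (∑ j ∈ reachSet g i, δ ^ (g.dist i j - 1) * f j)
      - ((nbrSet g i).card : ℝ) * c := rfl

lemma mem_reachSet [Fintype I] {g : SimpleGraph I} {i j : I} :
    j ∈ reachSet g i ↔ j ≠ i ∧ g.Reachable i j := by simp [reachSet]

lemma mem_nbrSet [Fintype I] {g : SimpleGraph I} {i j : I} :
    j ∈ nbrSet g i ↔ g.Adj i j := by simp [nbrSet]

lemma exists_adj_source {g : SimpleGraph I} {i j : I} (h : g.Reachable i j) (hne : i ≠ j) :
    ∃ k, g.Adj i k := by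
  obtain ⟨w⟩ := h
  cases w with
  | nil => exact absurd rfl hne
  | cons h' _ => exact ⟨_, h'⟩

lemma exists_adj_target {g : SimpleGraph I} {i j : I} (h : g.Reachable i j) (hne : i ≠ j) :
    ∃ k, g.Adj k j := by
  obtain ⟨k, hk⟩ := exists_adj_source h.symm hne.symm
  exact ⟨k, hk.symm⟩

section starOnFacts

variable [DecidableEq I] [Fintype I] {A : Finset I} {i₀ : I}

lemma starOn_reach_mem {i j : I} (h : (starOn A i₀).Reachable i j) (hne : i ≠ j) : j ∈ A := by
  obtain ⟨k, hk⟩ := exists_adj_target h hne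
  exact hk.2.2.2

lemma starOn_reach_mem' {i j : I} (h : (starOn A i₀).Reachable i j) (hne : i ≠ j) : i ∈ A := by
  obtain ⟨k, hk⟩ := exists_adj_source h hne
  exact hk.2.2.1

lemma starOn_reach (hi₀ : i₀ ∈ A) {i j : I} (hi : i ∈ A) (hj : j ∈ A) :
    (starOn A i₀).Reachable i j := by
  have h1 : (starOn A i₀).Reachable i i₀ := by
    by_cases h : i = i₀
    · rw [h]
    · exact (SimpleGraph.Adj.reachable ⟨h, Or.inr rfl, hi, hi₀⟩)
  have h2 : (starOn A i₀).Reachable i₀ j := by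
    by_cases h : i₀ = j
    · rw [h]
    · exact (SimpleGraph.Adj.reachable ⟨h, Or.inl rfl, hi₀, hj⟩)
  exact h1.trans h2

lemma starOn_reachSet (hi₀ : i₀ ∈ A) {i : I} (hi : i ∈ A) :
    reachSet (starOn A i₀) i = A.erase i := by
  ext j
  simp only [mem_reachSet, mem_erase]
  constructor
  · rintro ⟨hne, hr⟩
    exact ⟨hne, starOn_reach_mem hr (Ne.symm hne)⟩
  · rintro ⟨hne, hj⟩
    exact ⟨hne, starOn_reach hi₀ hi hj⟩

lemma starOn_dist_center (hi₀ : i₀ ∈ A) {j : I} (hj : j ∈ A) (hne : j ≠ i₀) :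
    (starOn A i₀).dist i₀ j = 1 :=
  SimpleGraph.dist_eq_one_iff_adj.mpr ⟨Ne.symm hne, Or.inl rfl, hi₀, hj⟩

lemma starOn_dist_leaf (hi₀ : i₀ ∈ A) {i j : I} (hi : i ∈ A) (hj : j ∈ A)
    (hii : i ≠ i₀) (hji : j ≠ i₀) (hij : i ≠ j) : (starOn A i₀).dist i j = 2 := by
  have hle : (starOn A i₀).dist i j ≤ 2 := by
    have a1 : (starOn A i₀).Adj i i₀ := ⟨hii, Or.inr rfl, hi, hi₀⟩
    have a2 : (starOn A i₀).Adj i₀ j := ⟨Ne.symm hji, Or.inl rfl, hi₀, hj⟩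
    have h := SimpleGraph.dist_le (SimpleGraph.Walk.cons a1 (SimpleGraph.Walk.cons a2 SimpleGraph.Walk.nil))
    simpa using h
  have h0 : (starOn A i₀).dist i j ≠ 0 := by
    rw [SimpleGraph.dist_ne_zero_iff_ne_and_reachable]
    exact ⟨hij, starOn_reach hi₀ hi hj⟩
  have h1 : (starOn A i₀).dist i j ≠ 1 := by
    rw [ne_eq, SimpleGraph.dist_eq_one_iff_adj]
    rintro ⟨-, h | h, -⟩
    · exact hii h
    · exact hji h
  omega

lemma payoff_starOn_nonmem (fα fβ c δ : ℝ) {i : I} (hi : i ∉ A) :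
    payoff (fTheta A fα fβ) c δ (starOn A i₀) i = 0 := by
  have h1 : reachSet (starOn A i₀) i = ∅ := by
    ext j
    simp only [mem_reachSet, notMem_empty, iff_false, not_and]
    intro hne hr
    exact hi (starOn_reach_mem' hr (Ne.symm hne))
  have h2 : nbrSet (starOn A i₀) i = ∅ := by
    ext j
    simp only [mem_nbrSet, notMem_empty, iff_false]
    rintro ⟨-, -, hiA, -⟩
    exact hi hiA
  rw [payoff_eq, h1, h2]
  simp

lemma payoff_starOn_center (fα fβ c δ : ℝ) (hi₀ : i₀ ∈ A) :
    payoff (fTheta A fα fβ) c δ (starOn A i₀) i₀ = ((A.card : ℝ) - 1) * (fα - c) := by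
  have hadjf : nbrSet (starOn A i₀) i₀ = A.erase i₀ := by
    ext j
    simp only [mem_nbrSet, mem_erase]
    constructor
    · rintro ⟨hne, -, -, hj⟩; exact ⟨Ne.symm hne, hj⟩
    · rintro ⟨hne, hj⟩; exact ⟨Ne.symm hne, Or.inl rfl, hi₀, hj⟩
  have hsum : ∀ j ∈ A.erase i₀,
      δ ^ ((starOn A i₀).dist i₀ j - 1) * fTheta A fα fβ j = fα := by
    intro j hj
    rw [starOn_dist_center hi₀ (mem_of_mem_erase hj) (ne_of_mem_erase hj)]
    simp [fTheta, mem_of_mem_erase hj]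
  rw [payoff_eq, starOn_reachSet hi₀ hi₀, hadjf, Finset.sum_congr rfl hsum,
    Finset.sum_const, card_erase_of_mem hi₀, nsmul_eq_mul]
  have : ((A.card - 1 : ℕ) : ℝ) = (A.card : ℝ) - 1 := by
    have : 1 ≤ A.card := card_pos.mpr ⟨i₀, hi₀⟩
    push_cast [this]; ring
  rw [this]; ring

lemma payoff_starOn_leaf (fα fβ c δ : ℝ) (hi₀ : i₀ ∈ A) {i : I} (hi : i ∈ A) (hne : i ≠ i₀)
    (hA2 : 2 ≤ A.card) :
    payoff (fTheta A fα fβ) c δ (starOn A i₀) i = fα - c + δ * ((A.card : ℝ) - 2) * fα := by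
  have hadjf : nbrSet (starOn A i₀) i = {i₀} := by
    ext j
    simp only [mem_nbrSet, mem_singleton]
    constructor
    · rintro ⟨hne', h | h, -, -⟩
      · exact absurd h hne
      · exact h
    · rintro rfl; exact ⟨hne, Or.inr rfl, hi, hi₀⟩
  have hi₀e : i₀ ∈ A.erase i := mem_erase.mpr ⟨Ne.symm hne, hi₀⟩
  have hsplit := Finset.add_sum_erase (A.erase i)
    (fun j => δ ^ ((starOn A i₀).dist i j - 1) * fTheta A fα fβ j) hi₀e
  beta_reduce at hsplit
  have hterm0 : δ ^ ((starOn A i₀).dist i i₀ - 1) * fTheta A fα fβ i₀ = fα := by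
    have : (starOn A i₀).dist i i₀ = 1 := SimpleGraph.dist_eq_one_iff_adj.mpr ⟨hne, Or.inr rfl, hi, hi₀⟩
    simp [this, fTheta, hi₀]
  have hsum : ∀ j ∈ (A.erase i).erase i₀,
      δ ^ ((starOn A i₀).dist i j - 1) * fTheta A fα fβ j = δ * fα := by
    intro j hj
    have hji₀ : j ≠ i₀ := ne_of_mem_erase hj
    have hj' : j ∈ A.erase i := mem_of_mem_erase hj
    have hjA : j ∈ A := mem_of_mem_erase hj'
    have hij : i ≠ j := Ne.symm (ne_of_mem_erase hj')
    rw [starOn_dist_leaf hi₀ hi hjA hne hji₀ hij]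
    simp [fTheta, hjA]
  have hcard : (((A.erase i).erase i₀).card : ℝ) = (A.card : ℝ) - 2 := by
    rw [card_erase_of_mem hi₀e, card_erase_of_mem hi]
    have : 2 ≤ A.card := hA2
    push_cast [Nat.sub_sub]
    rw [Nat.cast_sub this]
    norm_num
  rw [payoff_eq, starOn_reachSet hi₀ hi, hadjf, ← hsplit, hterm0,
    Finset.sum_congr rfl hsum, Finset.sum_const, nsmul_eq_mul, hcard]
  simp; ring

end starOnFacts

lemma algA (fα fβ c δ nα nβ a b : ℝ) (hδ0 : 0 < δ) (hδ1 : δ < 1) (hc : 0 < c)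
    (hfβ : 0 < fβ) (hfαβ : fβ < fα) (hfc : c ≤ fα)
    (h1 : (1 - δ) * fα < c)
    (h2 : (1 + δ * (nα - 1)) * fα + (1 + δ * (nα + nβ - 2)) * fβ < 2 * c)
    (ha1 : 1 ≤ a) (hab : a ≤ nα) (hb0 : 0 ≤ b) (hbn : b ≤ nβ) (hnα : 2 ≤ nα) :
    δ * ((a + b) * (a * fα + b * fβ) - (a * fα + b * fβ))
      + (a - 1) * (2 * ((1 - δ) * fα - c)) + b * ((1 - δ) * (fα + fβ) - 2 * c)
      ≤ (nα - 1) * (fα - c) + (a - 1) * (fα - c + δ * (nα - 2) * fα) := by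
  have hfα : 0 < fα := lt_of_lt_of_le hc hfc
  have hbr : (1 + δ * (a - 1)) * fα + (1 + δ * (a + b - 2)) * fβ ≤ 2 * c := by
    nlinarith [mul_nonneg (mul_nonneg hδ0.le (sub_nonneg.2 hab)) hfα.le,
      mul_nonneg (mul_nonneg hδ0.le (by linarith : (0:ℝ) ≤ nα + nβ - (a + b))) hfβ.le]
  have hβ : b * ((1 + δ * (a - 1)) * fα + (1 + δ * (a + b - 2)) * fβ - 2 * c) ≤ 0 := by
    nlinarith [mul_nonneg hb0 (sub_nonneg.2 hbr)]
  have hα : (a - 1) * (δ * a * fα + 2 * ((1 - δ) * fα - c))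
      ≤ (a - 1) * (2 * (fα - c) + δ * (nα - 2) * fα) := by
    apply mul_le_mul_of_nonneg_left ?_ (by linarith : (0:ℝ) ≤ a - 1)
    nlinarith [mul_nonneg (mul_nonneg hδ0.le (sub_nonneg.2 hab)) hfα.le]
  have hZ : (a - 1) * (fα - c) ≤ (nα - 1) * (fα - c) := by
    nlinarith [mul_nonneg (sub_nonneg.2 hab) (sub_nonneg.2 hfc)]
  have hid : δ * ((a + b) * (a * fα + b * fβ) - (a * fα + b * fβ))
      + (a - 1) * (2 * ((1 - δ) * fα - c)) + b * ((1 - δ) * (fα + fβ) - 2 * c)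
      = (a - 1) * (δ * a * fα + 2 * ((1 - δ) * fα - c))
        + b * ((1 + δ * (a - 1)) * fα + (1 + δ * (a + b - 2)) * fβ - 2 * c) := by ring
  rw [hid]
  have : (a - 1) * (2 * (fα - c) + δ * (nα - 2) * fα)
      = (a - 1) * (fα - c) + (a - 1) * (fα - c + δ * (nα - 2) * fα) := by ring
  linarith

lemma algB (fα fβ c δ nα nβ b : ℝ) (hδ0 : 0 < δ) (hδ1 : δ < 1) (hc : 0 < c)
    (hfβ : 0 < fβ) (hfαβ : fβ < fα)
    (h2 : (1 + δ * (nα - 1)) * fα + (1 + δ * (nα + nβ - 2)) * fβ < 2 * c)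
    (hb1 : 1 ≤ b) (hbn : b ≤ nβ) (hnα : 2 ≤ nα) :
    δ * (b * (b * fβ) - b * fβ) + (b - 1) * ((1 - δ) * (fα + fβ) - 2 * c) ≤ 0 := by
  have hfα : 0 < fα := lt_trans hfβ hfαβ
  have hbr : δ * b * fβ + (1 - δ) * (fα + fβ) - 2 * c ≤ 0 := by
    nlinarith [mul_nonneg (mul_nonneg hδ0.le (by linarith : (0:ℝ) ≤ nα)) hfα.le,
      mul_nonneg (mul_nonneg hδ0.le (by linarith : (0:ℝ) ≤ nα + nβ - 1 - b)) hfβ.le]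
  have hid : δ * (b * (b * fβ) - b * fβ) + (b - 1) * ((1 - δ) * (fα + fβ) - 2 * c)
      = (b - 1) * (δ * b * fβ + (1 - δ) * (fα + fβ) - 2 * c) := by ring
  rw [hid]
  exact mul_nonpos_of_nonneg_of_nonpos (by linarith) hbr

lemma charge [Fintype I] [DecidableEq I] {g' : SimpleGraph I} {C : Finset I} {r : I} (f : I → ℝ) (c δ M : ℝ)
    (hδ1 : δ ≤ 1)
    (hCadj : ∀ v ∈ C, ∀ u, g'.Adj v u → u ∈ C)
    (hCreach : ∀ v ∈ C, g'.Reachable r v)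
    (hM : ∀ j, f j ≤ M)
    (hneg : ∀ j, (1 - δ) * f j - c ≤ 0) :
    ∑ i ∈ C, ∑ j ∈ C, (if g'.Adj i j then (1 - δ) * f j - c else 0)
      ≤ ∑ v ∈ C.erase r, (((1 - δ) * f v - c) + ((1 - δ) * M - c)) := by
  classical
  have hex : ∀ v : I, ∃ u : I, v ∈ C.erase r → g'.Adj v u ∧ g'.dist r u < g'.dist r v := by
    intro v
    by_cases hv : v ∈ C.erase r
    · have hvr : v ≠ r := ne_of_mem_erase hv
      have hreach : g'.Reachable r v := hCreach v (mem_of_mem_erase hv)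
      obtain ⟨w, hw⟩ := hreach.exists_walk_length_eq_dist
      cases hwr : w.reverse with
      | nil => exact absurd rfl hvr
      | cons hadj q =>
        rename_i u
        refine ⟨u, fun _ => ⟨hadj, ?_⟩⟩
        have hlen : w.length = q.length + 1 := by
          have := congrArg SimpleGraph.Walk.length hwr
          simpa using this
        have hdu : g'.dist r u ≤ q.length := by
          have := SimpleGraph.dist_le q.reverse
          simpa using this
        omega
    · exact ⟨v, fun h => absurd h hv⟩
  choose p hp using hex
  have hpadj : ∀ v ∈ C.erase r, g'.Adj v (p v) := fun v hv => (hp v hv).1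
  have hpdist : ∀ v ∈ C.erase r, g'.dist r (p v) < g'.dist r v := fun v hv => (hp v hv).2
  set τ : I × I → ℝ := fun q => if g'.Adj q.1 q.2 then (1 - δ) * f q.2 - c else 0 with hτ
  have hτnonpos : ∀ q : I × I, τ q ≤ 0 := by
    intro q
    rw [hτ]
    dsimp only
    split
    · exact hneg _
    · exact le_refl 0
  set D : Finset (I × I) := (C.erase r).biUnion (fun v => {(v, p v), (p v, v)}) with hD
  have hDsub : D ⊆ C ×ˢ C := by
    intro q hq
    rw [hD, mem_biUnion] at hq
    obtain ⟨v, hv, hq⟩ := hq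
    have hvC : v ∈ C := mem_of_mem_erase hv
    have hpC : p v ∈ C := hCadj v hvC _ (hpadj v hv)
    rcases mem_insert.mp hq with rfl | hq
    · exact mem_product.mpr ⟨hvC, hpC⟩
    · rw [mem_singleton] at hq
      subst hq
      exact mem_product.mpr ⟨hpC, hvC⟩
  have hstep1 : ∑ i ∈ C, ∑ j ∈ C, (if g'.Adj i j then (1 - δ) * f j - c else 0)
      = ∑ q ∈ C ×ˢ C, τ q := by
    rw [Finset.sum_product]
  have hstep2 : ∑ q ∈ C ×ˢ C, τ q ≤ ∑ q ∈ D, τ q := by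
    have := Finset.sum_le_sum_of_subset_of_nonneg hDsub
      (fun q _ _ => neg_nonneg.mpr (hτnonpos q)) (f := fun q => -τ q)
    have h2 : ∑ q ∈ D, -τ q = -∑ q ∈ D, τ q := by rw [Finset.sum_neg_distrib]
    have h3 : ∑ q ∈ C ×ˢ C, -τ q = -∑ q ∈ C ×ˢ C, τ q := by rw [Finset.sum_neg_distrib]
    rw [h2, h3] at this
    linarith
  have hdisj : (↑(C.erase r) : Set I).PairwiseDisjoint (fun v => ({(v, p v), (p v, v)} : Finset (I × I))) := by
    intro v hv w hw hvw
    refine Finset.disjoint_left.mpr ?_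
    intro q hqv hqw
    simp only [mem_insert, mem_singleton] at hqv hqw
    have hv' : v ∈ C.erase r := hv
    have hw' : w ∈ C.erase r := hw
    rcases hqv with rfl | h1 <;> rcases hqw with h2 | h2
    · exact hvw (congrArg Prod.fst h2)
    · have e1 : v = p w := congrArg Prod.fst h2
      have e2 : p v = w := congrArg Prod.snd h2
      have d1 := hpdist v hv'
      have d2 := hpdist w hw'
      rw [e2] at d1
      rw [← e1] at d2
      omega
    · rw [h1] at h2
      have e1 : p v = w := congrArg Prod.fst h2
      have e2 : v = p w := congrArg Prod.snd h2
      have d1 := hpdist v hv'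
      have d2 := hpdist w hw'
      rw [e1] at d1
      rw [← e2] at d2
      omega
    · rw [h1] at h2
      exact hvw (congrArg Prod.snd h2)
  have hstep3 : ∑ q ∈ D, τ q = ∑ v ∈ C.erase r, (τ (v, p v) + τ (p v, v)) := by
    rw [hD, Finset.sum_biUnion hdisj]
    refine Finset.sum_congr rfl fun v hv => ?_
    have hne : (v, p v) ≠ (p v, v) := by
      intro h
      exact (hpadj v hv).ne (congrArg Prod.fst h)
    rw [Finset.sum_pair hne]
  have hstep4 : ∀ v ∈ C.erase r,
      τ (v, p v) + τ (p v, v) ≤ ((1 - δ) * f v - c) + ((1 - δ) * M - c) := by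
    intro v hv
    have h1 : τ (v, p v) = (1 - δ) * f (p v) - c := if_pos (hpadj v hv)
    have h2 : τ (p v, v) = (1 - δ) * f v - c := if_pos (hpadj v hv).symm
    rw [h1, h2]
    have : (1 - δ) * f (p v) ≤ (1 - δ) * M :=
      mul_le_mul_of_nonneg_left (hM _) (by linarith)
    linarith
  calc ∑ i ∈ C, ∑ j ∈ C, (if g'.Adj i j then (1 - δ) * f j - c else 0)
      = ∑ q ∈ C ×ˢ C, τ q := hstep1
    _ ≤ ∑ q ∈ D, τ q := hstep2
    _ = ∑ v ∈ C.erase r, (τ (v, p v) + τ (p v, v)) := hstep3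
    _ ≤ ∑ v ∈ C.erase r, (((1 - δ) * f v - c) + ((1 - δ) * M - c)) := Finset.sum_le_sum hstep4

lemma payoff_upper [Fintype I] {g' : SimpleGraph I} {C : Finset I} {i' : I}
    (f : I → ℝ) (c δ : ℝ) (hδ0 : 0 < δ) (hδ1 : δ < 1) (hf : ∀ j, 0 ≤ f j)
    (hC : ∀ {j : I}, j ∈ C ↔ g'.Reachable i' j) {i : I} (hi : i ∈ C) :
    payoff f c δ g' i ≤ δ * ((∑ j ∈ C, f j) - f i)
      + ∑ j ∈ C, (if g'.Adj i j then (1 - δ) * f j - c else 0) := by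
  classical
  have hiR : g'.Reachable i' i := hC.mp hi
  have hreach : reachSet g' i = C.erase i := by
    ext j
    rw [mem_reachSet, mem_erase, hC]
    exact ⟨fun ⟨hne, hr⟩ => ⟨hne, hiR.trans hr⟩, fun ⟨hne, hr⟩ => ⟨hne, hiR.symm.trans hr⟩⟩
  have hadjC : ∀ {j : I}, g'.Adj i j → j ∈ C.erase i := by
    intro j hadj
    exact mem_erase.mpr ⟨hadj.ne', hC.mpr (hiR.trans hadj.reachable)⟩
  have hcost : ((nbrSet g' i).card : ℝ) * c = ∑ j ∈ C.erase i, (if g'.Adj i j then c else 0) := by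
    rw [← Finset.sum_filter]
    have heq : (C.erase i).filter (fun j => g'.Adj i j) = nbrSet g' i := by
      ext j
      rw [mem_filter, mem_nbrSet]
      exact ⟨fun h => h.2, fun h => ⟨hadjC h, h⟩⟩
    rw [heq, Finset.sum_const, nsmul_eq_mul]
  have hterm : ∀ j ∈ C.erase i,
      δ ^ (g'.dist i j - 1) * f j - (if g'.Adj i j then c else 0)
        ≤ δ * f j + (if g'.Adj i j then (1 - δ) * f j - c else 0) := by
    intro j hj
    by_cases hadj : g'.Adj i j
    · rw [if_pos hadj, if_pos hadj, SimpleGraph.dist_eq_one_iff_adj.mpr hadj]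
      simp only [Nat.sub_self, pow_zero]
      nlinarith [hf j]
    · rw [if_neg hadj, if_neg hadj]
      have hne : i ≠ j := fun h => (mem_erase.mp hj).1 h.symm
      have hr : g'.Reachable i j := hiR.symm.trans (hC.mp (mem_of_mem_erase hj))
      have hd0 : g'.dist i j ≠ 0 :=
        SimpleGraph.dist_ne_zero_iff_ne_and_reachable.mpr ⟨hne, hr⟩
      have hd1 : g'.dist i j ≠ 1 := by
        rw [ne_eq, SimpleGraph.dist_eq_one_iff_adj]
        exact hadj
      have hpow : δ ^ (g'.dist i j - 1) ≤ δ := by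
        have h1 : 1 ≤ g'.dist i j - 1 := by omega
        calc δ ^ (g'.dist i j - 1) ≤ δ ^ 1 := pow_le_pow_of_le_one hδ0.le hδ1.le h1
          _ = δ := pow_one δ
      have := mul_le_mul_of_nonneg_right hpow (hf j)
      linarith
  have hsum : ∑ j ∈ C.erase i, (δ * f j + (if g'.Adj i j then (1 - δ) * f j - c else 0))
      = δ * ((∑ j ∈ C, f j) - f i)
        + ∑ j ∈ C, (if g'.Adj i j then (1 - δ) * f j - c else 0) := by
    rw [Finset.sum_add_distrib, ← Finset.mul_sum, Finset.sum_erase_eq_sub hi]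
    congr 1
    exact Finset.sum_erase _ (by rw [if_neg (g'.irrefl)])
  calc payoff f c δ g' i
      = ∑ j ∈ C.erase i, (δ ^ (g'.dist i j - 1) * f j - (if g'.Adj i j then c else 0)) := by
        rw [payoff_eq, hreach, hcost, Finset.sum_sub_distrib]
    _ ≤ ∑ j ∈ C.erase i, (δ * f j + (if g'.Adj i j then (1 - δ) * f j - c else 0)) :=
        Finset.sum_le_sum hterm
    _ = _ := hsum

set_option maxHeartbeats 1000000 in
lemma coreStable_of_le [Fintype I] [DecidableEq I] (A : Finset I) (fα fβ c δ : ℝ)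
    (hfαβ : fβ < fα) (hfβ : 0 < fβ) (hc : 0 < c)
    (hδ0 : 0 < δ) (hδ1 : δ < 1)
    (hA2 : 2 ≤ A.card)
    (h1 : (1 - δ) * fα < c)
    (h2 : (1 + δ * ((A.card : ℝ) - 1)) * fα
        + (1 + δ * ((A.card : ℝ) + (Aᶜ.card : ℝ) - 2)) * fβ < 2 * c)
    (i₀ : I) (hi₀ : i₀ ∈ A) (hfc : c ≤ fα) :
    CoreStable (fTheta A fα fβ) c δ (starOn A i₀) := by
  classical
  rintro ⟨I', g', hedge, hwk, i', hi'I, hstr⟩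
  set f : I → ℝ := fTheta A fα fβ with hfdef
  have hfα0 : 0 < fα := lt_of_lt_of_le hc hfc
  have hfle : ∀ j, f j ≤ fα := by
    intro j
    rw [hfdef, fTheta]
    split
    · exact le_refl _
    · exact hfαβ.le
  have hfpos : ∀ j, 0 ≤ f j := by
    intro j
    rw [hfdef, fTheta]
    split
    · exact hfα0.le
    · exact hfβ.le
  have hneg : ∀ j, (1 - δ) * f j - c ≤ 0 := by
    intro j
    have : (1 - δ) * f j ≤ (1 - δ) * fα := mul_le_mul_of_nonneg_left (hfle j) (by linarith)
    linarith
  set C : Finset I := univ.filter (fun j => g'.Reachable i' j) with hCdef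
  have hC : ∀ {j : I}, j ∈ C ↔ g'.Reachable i' j := by
    intro j
    rw [hCdef, mem_filter]
    simp
  have hi'C : i' ∈ C := hC.mpr (SimpleGraph.Reachable.refl i')
  have hCI' : ∀ j ∈ C, j ∈ I' := by
    intro j hj
    by_cases hji : j = i'
    · rw [hji]; exact hi'I
    · obtain ⟨k, hk⟩ := exists_adj_target (hC.mp hj) (Ne.symm hji)
      exact (hedge k j hk).2
  have hCadj : ∀ v ∈ C, ∀ u, g'.Adj v u → u ∈ C :=
    fun v hv u hadj => hC.mpr ((hC.mp hv).trans hadj.reachable)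
  have hlt : ∑ i ∈ C, payoff f c δ (starOn A i₀) i < ∑ i ∈ C, payoff f c δ g' i :=
    Finset.sum_lt_sum (fun i hi => hwk i (hCI' i hi)) ⟨i', hi'C, hstr⟩
  set S : ℝ := ∑ j ∈ C, f j with hSdef
  set T : ℝ := ∑ i ∈ C, ∑ j ∈ C, (if g'.Adj i j then (1 - δ) * f j - c else 0) with hTdef
  have hsum1 : ∑ i ∈ C, payoff f c δ g' i ≤ δ * ((C.card : ℝ) * S - S) + T := by
    have hb := Finset.sum_le_sum (s := C)
      (fun i hi => payoff_upper f c δ hδ0 hδ1 hfpos hC hi)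
    have heq : ∑ i ∈ C, (δ * (S - f i)
        + ∑ j ∈ C, (if g'.Adj i j then (1 - δ) * f j - c else 0))
        = δ * ((C.card : ℝ) * S - S) + T := by
      rw [Finset.sum_add_distrib, ← Finset.mul_sum, Finset.sum_sub_distrib,
        Finset.sum_const, nsmul_eq_mul]
    rw [← heq]
    exact hb
  set CA : Finset I := C.filter (fun x => x ∈ A) with hCAdef
  set CB : Finset I := C.filter (fun x => x ∉ A) with hCBdef
  have hCAsub : CA ⊆ A := fun x hx => (mem_filter.mp hx).2
  have hCBsub : CB ⊆ Aᶜ := fun x hx => mem_compl.mpr (mem_filter.mp hx).2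
  have hcards : CA.card + CB.card = C.card := by
    rw [hCAdef, hCBdef]
    exact Finset.card_filter_add_card_filter_not _
  have hS : S = (CA.card : ℝ) * fα + (CB.card : ℝ) * fβ := by
    rw [hSdef]
    have : ∀ j ∈ C, f j = if j ∈ A then fα else fβ := fun j _ => rfl
    rw [Finset.sum_congr rfl this, Finset.sum_ite, Finset.sum_const, Finset.sum_const,
      nsmul_eq_mul, nsmul_eq_mul]
  have haA : CA.card ≤ A.card := Finset.card_le_card hCAsub
  have hbB : CB.card ≤ Aᶜ.card := Finset.card_le_card hCBsub
  rcases CA.eq_empty_or_nonempty with hCA0 | ⟨r, hrCA⟩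
  · -- no type-α agents in the component
    have hnotA : ∀ j ∈ C, j ∉ A := by
      intro j hj hjA
      have hmem : j ∈ CA := by rw [hCAdef, mem_filter]; exact ⟨hj, hjA⟩
      rw [hCA0] at hmem
      exact notMem_empty j hmem
    have hCb1 : 1 ≤ C.card := Finset.card_pos.mpr ⟨i', hi'C⟩
    have hCB_eq : CB = C := by
      rw [hCBdef]
      exact Finset.filter_true_of_mem hnotA
    have hSb : S = (C.card : ℝ) * fβ := by
      rw [hS, hCA0, hCB_eq]
      simp
    -- charge with root i'
    have hcharge := charge (g' := g') (C := C) (r := i') f c δ fα hδ1.le hCadj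
      (fun v hv => hC.mp hv) hfle hneg
    have hTbound : T ≤ ((C.card : ℝ) - 1) * (((1 - δ) * fβ - c) + ((1 - δ) * fα - c)) := by
      rw [hTdef]
      refine le_trans hcharge ?_
      have hcongr : ∀ v ∈ C.erase i',
          ((1 - δ) * f v - c) + ((1 - δ) * fα - c)
            = ((1 - δ) * fβ - c) + ((1 - δ) * fα - c) := by
        intro v hv
        have : f v = fβ := by
          rw [hfdef, fTheta, if_neg (hnotA v (mem_of_mem_erase hv))]
        rw [this]
      rw [Finset.sum_congr rfl hcongr, Finset.sum_const, nsmul_eq_mul,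
        Finset.card_erase_of_mem hi'C]
      have : ((C.card - 1 : ℕ) : ℝ) = (C.card : ℝ) - 1 := by
        push_cast [hCb1]; ring
      rw [this]
    have hzero : ∑ i ∈ C, payoff f c δ (starOn A i₀) i = 0 :=
      Finset.sum_eq_zero fun i hi => payoff_starOn_nonmem fα fβ c δ (hnotA i hi)
    have hCcard : C.card ≤ Aᶜ.card := by
      rw [← hCB_eq]
      exact hbB
    have halg := algB fα fβ c δ (A.card : ℝ) (Aᶜ.card : ℝ) (C.card : ℝ)
      hδ0 hδ1 hc hfβ hfαβ h2
      (by exact_mod_cast hCb1) (by exact_mod_cast hCcard)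
      (by exact_mod_cast hA2)
    have hfin : δ * ((C.card : ℝ) * S - S)
        + ((C.card : ℝ) - 1) * (((1 - δ) * fβ - c) + ((1 - δ) * fα - c)) ≤ 0 := by
      rw [hSb]
      nlinarith [halg]
    linarith
  · -- r is a type-α agent in the component
    have hrC : r ∈ C := (mem_filter.mp hrCA).1
    have hrA : r ∈ A := (mem_filter.mp hrCA).2
    have ha1 : 1 ≤ CA.card := Finset.card_pos.mpr ⟨r, hrCA⟩
    have hcharge := charge (g' := g') (C := C) (r := r) f c δ fα hδ1.le hCadj
      (fun v hv => (hC.mp hrC).symm.trans (hC.mp hv)) hfle hneg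
    set Bαα : ℝ := 2 * ((1 - δ) * fα - c) with hBααdef
    set Bαβ : ℝ := (1 - δ) * (fα + fβ) - 2 * c with hBαβdef
    have hTbound : T ≤ ((CA.card : ℝ) - 1) * Bαα + (CB.card : ℝ) * Bαβ := by
      rw [hTdef]
      refine le_trans hcharge ?_
      have hcongr : ∀ v ∈ C.erase r,
          ((1 - δ) * f v - c) + ((1 - δ) * fα - c)
            = if v ∈ A then Bαα else Bαβ := by
        intro v hv
        by_cases hvA : v ∈ A
        · rw [if_pos hvA]
          have : f v = fα := by rw [hfdef, fTheta, if_pos hvA]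
          rw [this, hBααdef]; ring
        · rw [if_neg hvA]
          have : f v = fβ := by rw [hfdef, fTheta, if_neg hvA]
          rw [this, hBαβdef]; ring
      rw [Finset.sum_congr rfl hcongr, Finset.sum_ite, Finset.sum_const, Finset.sum_const,
        nsmul_eq_mul, nsmul_eq_mul]
      have hCAmem : ∀ {x : I}, x ∈ CA ↔ x ∈ C ∧ x ∈ A := by
        intro x
        rw [hCAdef]
        exact mem_filter
      have hCBmem : ∀ {x : I}, x ∈ CB ↔ x ∈ C ∧ x ∉ A := by
        intro x
        rw [hCBdef]
        exact mem_filter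
      have hfA : (C.erase r).filter (fun x => x ∈ A) = CA.erase r := by
        ext x
        constructor
        · intro hx
          have h1' := (mem_filter.mp hx).1
          have h2' := (mem_filter.mp hx).2
          exact mem_erase.mpr ⟨(mem_erase.mp h1').1,
            hCAmem.mpr ⟨(mem_erase.mp h1').2, h2'⟩⟩
        · intro hx
          have h1' := (mem_erase.mp hx).1
          have h2' := hCAmem.mp (mem_erase.mp hx).2
          exact mem_filter.mpr ⟨mem_erase.mpr ⟨h1', h2'.1⟩, h2'.2⟩
      have hfB : (C.erase r).filter (fun x => x ∉ A) = CB := by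
        ext x
        constructor
        · intro hx
          have h1' := (mem_filter.mp hx).1
          have h2' := (mem_filter.mp hx).2
          exact hCBmem.mpr ⟨mem_of_mem_erase h1', h2'⟩
        · intro hx
          have h1' := hCBmem.mp hx
          exact mem_filter.mpr ⟨mem_erase.mpr ⟨fun h => h1'.2 (h ▸ hrA), h1'.1⟩, h1'.2⟩
      rw [hfA, hfB, Finset.card_erase_of_mem hrCA]
      have : ((CA.card - 1 : ℕ) : ℝ) = (CA.card : ℝ) - 1 := by
        push_cast [ha1]; ring
      rw [this]
    set Z : ℝ := ((A.card : ℝ) - 1) * (fα - c) with hZdef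
    set L : ℝ := fα - c + δ * ((A.card : ℝ) - 2) * fα with hLdef
    have hA2r : (2 : ℝ) ≤ (A.card : ℝ) := by exact_mod_cast hA2
    have hLZ : Z ≤ L := by
      have hkey : 0 ≤ ((A.card : ℝ) - 2) * (c - (1 - δ) * fα) :=
        mul_nonneg (by linarith) (by linarith)
      rw [hZdef, hLdef]
      nlinarith [hkey]
    have hg0 : ∑ i ∈ C, payoff f c δ (starOn A i₀) i
        = ∑ i ∈ CA, payoff f c δ (starOn A i₀) i := by
      rw [← Finset.sum_filter_add_sum_filter_not C (fun x => x ∈ A), ← hCAdef]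
      have : ∑ i ∈ C.filter (fun x => x ∉ A), payoff f c δ (starOn A i₀) i = 0 :=
        Finset.sum_eq_zero fun i hi =>
          payoff_starOn_nonmem fα fβ c δ (mem_filter.mp hi).2
      rw [this, add_zero]
    have hpayCA : ∀ i ∈ CA, i ≠ i₀ → payoff f c δ (starOn A i₀) i = L := by
      intro i hi hne
      rw [hfdef, hLdef]
      exact payoff_starOn_leaf fα fβ c δ hi₀ (hCAsub hi) hne hA2
    have hsumCA : Z + ((CA.card : ℝ) - 1) * L ≤ ∑ i ∈ CA, payoff f c δ (starOn A i₀) i := by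
      by_cases hi₀CA : i₀ ∈ CA
      · rw [← Finset.add_sum_erase _ _ hi₀CA]
        have h1' : payoff f c δ (starOn A i₀) i₀ = Z := by
          rw [hfdef, hZdef]
          exact payoff_starOn_center fα fβ c δ hi₀
        have h2' : ∑ i ∈ CA.erase i₀, payoff f c δ (starOn A i₀) i
            = ((CA.card : ℝ) - 1) * L := by
          rw [Finset.sum_congr rfl (fun i hi =>
            hpayCA i (mem_of_mem_erase hi) (ne_of_mem_erase hi)),
            Finset.sum_const, nsmul_eq_mul, Finset.card_erase_of_mem hi₀CA]
          have : ((CA.card - 1 : ℕ) : ℝ) = (CA.card : ℝ) - 1 := by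
            push_cast [ha1]; ring
          rw [this]
        rw [h1', h2']
      · have hall : ∑ i ∈ CA, payoff f c δ (starOn A i₀) i = (CA.card : ℝ) * L := by
          rw [Finset.sum_congr rfl (fun i hi =>
            hpayCA i hi (fun h => hi₀CA (h ▸ hi))), Finset.sum_const, nsmul_eq_mul]
        rw [hall]
        have ha1r : (1 : ℝ) ≤ (CA.card : ℝ) := by exact_mod_cast ha1
        nlinarith [hLZ]
    have halg := algA fα fβ c δ (A.card : ℝ) (Aᶜ.card : ℝ) (CA.card : ℝ) (CB.card : ℝ)
      hδ0 hδ1 hc hfβ hfαβ hfc h1 h2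
      (by exact_mod_cast ha1) (by exact_mod_cast haA)
      (by positivity) (by exact_mod_cast hbB) hA2r
    have hmcast : (C.card : ℝ) = (CA.card : ℝ) + (CB.card : ℝ) := by
      exact_mod_cast hcards.symm
    have hfinal : δ * ((C.card : ℝ) * S - S) + ((CA.card : ℝ) - 1) * Bαα
        + (CB.card : ℝ) * Bαβ ≤ Z + ((CA.card : ℝ) - 1) * L := by
      rw [hS, hmcast, hBααdef, hBαβdef, hZdef, hLdef]
      exact halg
    linarith

lemma payoff_bot [Fintype I] (f : I → ℝ) (c δ : ℝ) (i : I) :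
    payoff f c δ (⊥ : SimpleGraph I) i = 0 := by
  have h1 : reachSet (⊥ : SimpleGraph I) i = ∅ := by
    ext j
    simp only [mem_reachSet, notMem_empty, iff_false, not_and]
    intro hne hr
    exact hne (SimpleGraph.reachable_bot.mp hr).symm
  have h2 : nbrSet (⊥ : SimpleGraph I) i = ∅ := by
    ext j
    simp [mem_nbrSet]
  rw [payoff_eq, h1, h2]
  simp


/-- Proposition 5(f): under the conditions of Theorem 2(f), the star on the
type-α agents with type-α center is core-stable iff `fα ≥ c`. -/
theorem prop5f {I : Type*} [Fintype I] [DecidableEq I]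
    (A : Finset I) (fα fβ c δ : ℝ)
    (hA : 1 ≤ A.card) (hB : 1 ≤ Aᶜ.card)
    (hfαβ : fβ < fα) (hfβ : 0 < fβ) (hc : 0 < c)
    (hδ0 : 0 < δ) (hδ1 : δ < 1)
    (hA2 : 2 ≤ A.card)
    (h1 : (1 - δ) * fα < c)
    (h2 : (1 + δ * ((A.card : ℝ) - 1)) * fα + (1 + δ * ((A.card : ℝ) + (Aᶜ.card : ℝ) - 2)) * fβ < 2 * c)
    (h3 : 2 * c < fα * (2 + δ * ((A.card : ℝ) - 2)))
    (i₀ : I) (hi₀ : i₀ ∈ A) :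
    CoreStable (fTheta A fα fβ) c δ (starOn A i₀) ↔ fα ≥ c := by
  constructor
  · intro hcs
    by_contra hlt
    push_neg at hlt
    apply hcs
    refine ⟨{i₀}, ⊥, ?_, ?_, ?_⟩
    · intro i j h
      simp at h
    · intro i hi
      rw [mem_singleton] at hi
      subst hi
      rw [payoff_starOn_center fα fβ c δ hi₀, payoff_bot]
      have hA2r : (2:ℝ) ≤ (A.card:ℝ) := by exact_mod_cast hA2
      nlinarith
    · refine ⟨i₀, mem_singleton_self i₀, ?_⟩
      rw [payoff_starOn_center fα fβ c δ hi₀, payoff_bot]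
      have hA2r : (2:ℝ) ≤ (A.card:ℝ) := by exact_mod_cast hA2
      nlinarith
  · intro hge
    exact coreStable_of_le A fα fβ c δ hfαβ hfβ hc hδ0 hδ1 hA2 h1 h2 i₀ hi₀ hge
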